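/- Let F_β(μ) = (1/2)‖Aμ − y‖² + β·h(μ) with A injective and h convex differentiable with L_h-Lipschitz gradient, and let μ(β) denote the unique unconstrained minimizer. Then for β₁, β₂ ≥ 0, ‖μ(β₂) − μ(β₁)‖ ≤ |β₂ − β₁|·‖∇h(μ(β₁))‖ / σ_min(A)². That is, the unconstrained solution path is locally Lipschitz in the tuning parameter. -/

import Mathlib

/-- First-order optimality condition for the penalized least squares problem. -/
lemma stmt17_opt {m n : ℕ} (A : Matrix (Fin m) (Fin n) ℝ) (y : Fin m → ℝ)
    (h : (Fin n → ℝ) → ℝ) (Dh : (Fin n → ℝ) → (Fin n → ℝ))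
    (hdiff : ∀ x v : Fin n → ℝ,
      HasDerivAt (fun s : ℝ => h (x + s • v)) (∑ j, Dh x j * v j) 0)
    (β : ℝ) (μ : Fin n → ℝ)
    (hmin : ∀ x : Fin n → ℝ,
      (1/2) * ∑ i, (A.mulVec μ i - y i)^2 + β * h μ ≤
        (1/2) * ∑ i, (A.mulVec x i - y i)^2 + β * h x)
    (v : Fin n → ℝ) :
    (∑ i, (A.mulVec μ i - y i) * (A.mulVec v i)) + β * ∑ j, Dh μ j * v j = 0 := by
  set g : ℝ → ℝ := fun s =>
    (1/2) * ∑ i, (A.mulVec μ i + s * A.mulVec v i - y i)^2 + β * h (μ + s • v) with hg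
  have hrw : ∀ s : ℝ, ∀ i, A.mulVec (μ + s • v) i = A.mulVec μ i + s * A.mulVec v i := by
    intro s i
    simp [Matrix.mulVec_add, Matrix.mulVec_smul]
  have hterm : ∀ i, HasDerivAt (fun s : ℝ => (A.mulVec μ i + s * A.mulVec v i - y i)^2)
      (2 * (A.mulVec μ i - y i) * A.mulVec v i) 0 := by
    intro i
    have h1 : HasDerivAt (fun s : ℝ => A.mulVec μ i + s * A.mulVec v i - y i)
        (A.mulVec v i) 0 := by
      simpa using
        (((hasDerivAt_id (0:ℝ)).mul_const (A.mulVec v i)).const_add (A.mulVec μ i)).sub_const (y i)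
    have h2 := h1.fun_pow 2
    norm_num at h2
    convert h2 using 1 <;> try ring
  have hsum := HasDerivAt.fun_sum (fun i (_ : i ∈ Finset.univ) => hterm i)
  have hq := hsum.const_mul (1/2 : ℝ)
  have hqd : (1/2 : ℝ) * ∑ i, 2 * (A.mulVec μ i - y i) * A.mulVec v i
      = ∑ i, (A.mulVec μ i - y i) * A.mulVec v i := by
    rw [Finset.mul_sum]
    exact Finset.sum_congr rfl fun i _ => by ring
  rw [hqd] at hq
  have hh := (hdiff μ v).const_mul β
  have hgd : HasDerivAt g
      ((∑ i, (A.mulVec μ i - y i) * (A.mulVec v i)) + β * ∑ j, Dh μ j * v j) 0 :=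
    hq.add hh
  have hloc : IsLocalMin g 0 := by
    apply Filter.Eventually.of_forall
    intro s
    have h0 : g 0 = (1/2) * ∑ i, (A.mulVec μ i - y i)^2 + β * h μ := by
      simp [hg]
    have hs : g s = (1/2) * ∑ i, (A.mulVec (μ + s • v) i - y i)^2 + β * h (μ + s • v) := by
      simp only [hg, hrw]
    rw [h0, hs]
    exact hmin (μ + s • v)
  exact hloc.hasDerivAt_eq_zero hgd

/-- Gradient inequality for a convex function with directional derivatives. -/
lemma stmt17_grad {n : ℕ} (h : (Fin n → ℝ) → ℝ) (Dh : (Fin n → ℝ) → (Fin n → ℝ))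
    (hconv : ConvexOn ℝ Set.univ h)
    (hdiff : ∀ x v : Fin n → ℝ,
      HasDerivAt (fun s : ℝ => h (x + s • v)) (∑ j, Dh x j * v j) 0)
    (x v : Fin n → ℝ) :
    h x + ∑ j, Dh x j * v j ≤ h (x + v) := by
  set φ : ℝ → ℝ := fun s => h (x + s • v) with hφ
  have hder := hdiff x v
  have hslope : Filter.Tendsto (slope φ 0) (nhdsWithin 0 {(0:ℝ)}ᶜ)
      (nhds (∑ j, Dh x j * v j)) := hasDerivAt_iff_tendsto_slope.mp hder
  have hslope' : Filter.Tendsto (slope φ 0) (nhdsWithin 0 (Set.Ioi (0:ℝ)))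
      (nhds (∑ j, Dh x j * v j)) :=
    hslope.mono_left (nhdsWithin_mono _ (fun s hs => ne_of_gt hs))
  have hb : ∀ᶠ s in nhdsWithin 0 (Set.Ioi (0:ℝ)), slope φ 0 s ≤ h (x + v) - h x := by
    filter_upwards [Ioc_mem_nhdsGT_of_mem (by norm_num : (0:ℝ) ∈ Set.Ico (0:ℝ) 1)]
      with s hs
    obtain ⟨hs0, hs1⟩ := hs
    have hc := hconv.2 (Set.mem_univ x) (Set.mem_univ (x + v))
      (by linarith : (0:ℝ) ≤ 1 - s) hs0.le (by ring)
    have harg : (1 - s) • x + s • (x + v) = x + s • v := by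
      rw [smul_add, ← add_assoc, ← add_smul]
      norm_num
    rw [harg] at hc
    have hφs : φ s = h (x + s • v) := rfl
    have hφ0 : φ 0 = h x := by simp [hφ]
    rw [slope_def_field, hφs, hφ0, sub_zero]
    simp only [smul_eq_mul] at hc
    rw [div_le_iff₀ hs0]
    nlinarith [hc]
  have := le_of_tendsto hslope' hb
  linarith

/-- Lipschitz continuity of the unconstrained solution path in the tuning parameter:
‖μ(β₂) − μ(β₁)‖ ≤ |β₂ − β₁| ‖∇h(μ(β₁))‖ / σ_min(A)². -/
theorem stmt17 {m n : ℕ} (A : Matrix (Fin m) (Fin n) ℝ) (y : Fin m → ℝ)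
    (hA : Function.Injective A.mulVec)
    (σ : ℝ) (hσ : 0 < σ)
    (hsv : ∀ x : Fin n → ℝ, σ^2 * ∑ j, x j ^ 2 ≤ ∑ i, (A.mulVec x i)^2)
    (h : (Fin n → ℝ) → ℝ) (Dh : (Fin n → ℝ) → (Fin n → ℝ))
    (hconv : ConvexOn ℝ Set.univ h)
    (hdiff : ∀ x v : Fin n → ℝ,
      HasDerivAt (fun s : ℝ => h (x + s • v)) (∑ j, Dh x j * v j) 0)
    (Lh : ℝ) (hLh : 0 < Lh)
    (hlip : ∀ x x' : Fin n → ℝ,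
      Real.sqrt (∑ j, (Dh x j - Dh x' j)^2) ≤ Lh * Real.sqrt (∑ j, (x j - x' j)^2))
    (β₁ β₂ : ℝ) (hβ₁ : 0 ≤ β₁) (hβ₂ : 0 ≤ β₂)
    (μ₁ μ₂ : Fin n → ℝ)
    (hmin₁ : ∀ x : Fin n → ℝ,
      (1/2) * ∑ i, (A.mulVec μ₁ i - y i)^2 + β₁ * h μ₁ ≤
        (1/2) * ∑ i, (A.mulVec x i - y i)^2 + β₁ * h x)
    (hmin₂ : ∀ x : Fin n → ℝ,
      (1/2) * ∑ i, (A.mulVec μ₂ i - y i)^2 + β₂ * h μ₂ ≤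
        (1/2) * ∑ i, (A.mulVec x i - y i)^2 + β₂ * h x) :
    Real.sqrt (∑ j, (μ₂ j - μ₁ j)^2) ≤
      |β₂ - β₁| * Real.sqrt (∑ j, (Dh μ₁ j)^2) / σ^2 := by
  set v : Fin n → ℝ := μ₂ - μ₁ with hv
  have hvj : ∀ j, v j = μ₂ j - μ₁ j := fun j => rfl
  have hμ₁v : μ₁ + v = μ₂ := by
    funext j; simp [hvj]
  have hμ₂v : μ₂ + (-v) = μ₁ := by
    funext j; simp [hvj]
  -- optimality conditions
  have opt₁ := stmt17_opt A y h Dh hdiff β₁ μ₁ hmin₁ v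
  have opt₂ := stmt17_opt A y h Dh hdiff β₂ μ₂ hmin₂ v
  -- A v = A μ₂ - A μ₁
  have hAv : ∀ i, A.mulVec v i = A.mulVec μ₂ i - A.mulVec μ₁ i := by
    intro i
    rw [hv, Matrix.mulVec_sub]
    rfl
  set T₁ := ∑ j, Dh μ₁ j * v j with hT₁
  set T₂ := ∑ j, Dh μ₂ j * v j with hT₂
  -- difference of optimality conditions gives the key identity
  have hQ : (∑ i, (A.mulVec v i)^2) =
      (∑ i, (A.mulVec μ₂ i - y i) * (A.mulVec v i)) -
      (∑ i, (A.mulVec μ₁ i - y i) * (A.mulVec v i)) := by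
    rw [← Finset.sum_sub_distrib]
    exact Finset.sum_congr rfl fun i _ => by rw [hAv i]; ring
  -- monotonicity of the gradient
  have g1 := stmt17_grad h Dh hconv hdiff μ₁ v
  have g2 := stmt17_grad h Dh hconv hdiff μ₂ (-v)
  rw [hμ₁v] at g1
  rw [hμ₂v] at g2
  have hsumneg : ∑ j, Dh μ₂ j * (-v) j = -T₂ := by
    rw [hT₂, ← Finset.sum_neg_distrib]
    exact Finset.sum_congr rfl fun j _ => by simp [mul_neg]
  rw [hsumneg] at g2
  have hmono : T₁ ≤ T₂ := by linarith
  -- key inequality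
  have key : (∑ i, (A.mulVec v i)^2) ≤ -(β₂ - β₁) * T₁ := by
    have h1 : (∑ i, (A.mulVec μ₁ i - y i) * (A.mulVec v i)) = -(β₁ * T₁) := by
      linarith [opt₁]
    have h2 : (∑ i, (A.mulVec μ₂ i - y i) * (A.mulVec v i)) = -(β₂ * T₂) := by
      linarith [opt₂]
    rw [hQ, h1, h2]
    nlinarith [mul_nonneg hβ₂ (sub_nonneg.mpr hmono)]
  -- Cauchy-Schwarz
  set N := Real.sqrt (∑ j, (μ₂ j - μ₁ j)^2) with hN
  set S := Real.sqrt (∑ j, (Dh μ₁ j)^2) with hS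
  have hvsq : ∑ j, v j ^ 2 = ∑ j, (μ₂ j - μ₁ j)^2 :=
    Finset.sum_congr rfl fun j _ => by rw [hvj]
  have hN2 : N^2 = ∑ j, (μ₂ j - μ₁ j)^2 :=
    Real.sq_sqrt (by positivity)
  have hS2 : S^2 = ∑ j, (Dh μ₁ j)^2 :=
    Real.sq_sqrt (by positivity)
  have hcs : |T₁| ≤ S * N := by
    have hsq : T₁^2 ≤ (∑ j, (Dh μ₁ j)^2) * (∑ j, (v j)^2) := by
      rw [hT₁]
      exact Finset.sum_mul_sq_le_sq_mul_sq Finset.univ _ _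
    have : |T₁| = Real.sqrt (T₁^2) := (Real.sqrt_sq_eq_abs T₁).symm
    rw [this]
    calc Real.sqrt (T₁^2) ≤ Real.sqrt ((∑ j, (Dh μ₁ j)^2) * (∑ j, (v j)^2)) :=
          Real.sqrt_le_sqrt hsq
      _ = S * N := by
          rw [Real.sqrt_mul (by positivity), hS, hvsq, hN]
  -- assemble
  have hchain : σ^2 * N^2 ≤ |β₂ - β₁| * S * N := by
    have h1 : σ^2 * (∑ j, v j ^ 2) ≤ ∑ i, (A.mulVec v i)^2 := hsv v
    have h2 : -(β₂ - β₁) * T₁ ≤ |β₂ - β₁| * |T₁| := by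
      calc -(β₂ - β₁) * T₁ ≤ |(-(β₂ - β₁)) * T₁| := le_abs_self _
        _ = |β₂ - β₁| * |T₁| := by rw [abs_mul, abs_neg]
    have h3 : |β₂ - β₁| * |T₁| ≤ |β₂ - β₁| * (S * N) :=
      mul_le_mul_of_nonneg_left hcs (abs_nonneg _)
    rw [hN2, ← hvsq]
    linarith
  have hNnn : 0 ≤ N := Real.sqrt_nonneg _
  by_cases hN0 : N = 0
  · rw [hN0]
    positivity
  · have hNpos : 0 < N := lt_of_le_of_ne hNnn (Ne.symm hN0)
    rw [le_div_iff₀ (by positivity : (0:ℝ) < σ^2)]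
    nlinarith [hchain]
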